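/- Let V₅ = (k/2)x₁² + (1/2)x₃² + (c/2)∫₀^∞ μ_{1-α}(ω)z(ω,t)²dω, where ẋ₃ = -k·x₁ - c·x₂, ẋ₁ = x₃ (in the composed sense), x₂ = ∫₀^∞ μ_{1-α}(ω)z(ω,t)dω, and ∂z/∂t = -ωz + x₃. Then V̇₅ = -c∫₀^∞ ω·μ_{1-α}(ω)·z(ω,t)²dω ≤ 0. -/

import Mathlib

open Real MeasureTheory Set

theorem stmt_12 (k c α : ℝ) (hk : 0 < k) (hc : 0 < c) (hα : α ∈ Set.Ioo (0:ℝ) 1)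
    (x₁ x₂ x₃ : ℝ → ℝ) (z : ℝ → ℝ → ℝ) (t : ℝ)
    (hzode : ∀ ω, 0 < ω → HasDerivAt (z ω) (-ω * z ω t + x₃ t) t)
    (hx₂ : x₂ t = ∫ ω in Set.Ioi (0:ℝ),
      (Real.sin ((1 - α) * π) / π) * ω ^ (α - 1) * z ω t)
    (hx₁ : HasDerivAt x₁ (x₃ t) t)
    (hx₃ : HasDerivAt x₃ (-k * x₁ t - c * x₂ t) t)
    (hswap : HasDerivAt
      (fun τ => ∫ ω in Set.Ioi (0:ℝ),
        (Real.sin ((1 - α) * π) / π) * ω ^ (α - 1) * (z ω τ) ^ 2)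
      (∫ ω in Set.Ioi (0:ℝ),
        (Real.sin ((1 - α) * π) / π) * ω ^ (α - 1) *
          (2 * z ω t * (-ω * z ω t + x₃ t))) t)
    (hint : Integrable (fun ω => ω * ((Real.sin ((1 - α) * π) / π) * ω ^ (α - 1)) * (z ω t) ^ 2)
      (volume.restrict (Set.Ioi (0:ℝ))))
    (hint2 : Integrable (fun ω => (Real.sin ((1 - α) * π) / π) * ω ^ (α - 1) * z ω t)
      (volume.restrict (Set.Ioi (0:ℝ)))) :
    HasDerivAt
      (fun τ => (k / 2) * (x₁ τ) ^ 2 + (1 / 2) * (x₃ τ) ^ 2 +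
        (c / 2) * (∫ ω in Set.Ioi (0:ℝ),
          (Real.sin ((1 - α) * π) / π) * ω ^ (α - 1) * (z ω τ) ^ 2))
      (-c * ∫ ω in Set.Ioi (0:ℝ),
        ω * ((Real.sin ((1 - α) * π) / π) * ω ^ (α - 1)) * (z ω t) ^ 2) t ∧
    (-c * ∫ ω in Set.Ioi (0:ℝ),
      ω * ((Real.sin ((1 - α) * π) / π) * ω ^ (α - 1)) * (z ω t) ^ 2) ≤ 0 := by
  have hkey : (∫ ω in Set.Ioi (0:ℝ),
      (Real.sin ((1 - α) * π) / π) * ω ^ (α - 1) * (2 * z ω t * (-ω * z ω t + x₃ t)))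
      = (-2) * (∫ ω in Set.Ioi (0:ℝ),
        ω * ((Real.sin ((1 - α) * π) / π) * ω ^ (α - 1)) * (z ω t) ^ 2)
        + (2 * x₃ t) * (∫ ω in Set.Ioi (0:ℝ),
        (Real.sin ((1 - α) * π) / π) * ω ^ (α - 1) * z ω t) := by
    rw [← integral_const_mul, ← integral_const_mul,
      ← integral_add (hint.const_mul _) (hint2.const_mul _)]
    congr 1; funext ω; ring
  constructor
  · have hd : HasDerivAt
        (fun τ => (k / 2) * (x₁ τ) ^ 2 + (1 / 2) * (x₃ τ) ^ 2 +
          (c / 2) * (∫ ω in Set.Ioi (0:ℝ),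
            (Real.sin ((1 - α) * π) / π) * ω ^ (α - 1) * (z ω τ) ^ 2))
        ((k / 2) * (2 * x₁ t * x₃ t) + (1 / 2) * (2 * x₃ t * (-k * x₁ t - c * x₂ t)) +
          (c / 2) * (∫ ω in Set.Ioi (0:ℝ),
            (Real.sin ((1 - α) * π) / π) * ω ^ (α - 1) *
              (2 * z ω t * (-ω * z ω t + x₃ t)))) t := by
      have := (((hx₁.pow 2).const_mul (k/2)).add ((hx₃.pow 2).const_mul (1/2))).add
        (hswap.const_mul (c/2))
      refine HasDerivAt.congr_deriv this ?_
      push_cast; ring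
    convert hd using 1
    rw [hkey, hx₂]; ring
  · have hI : 0 ≤ ∫ ω in Set.Ioi (0:ℝ),
        ω * ((Real.sin ((1 - α) * π) / π) * ω ^ (α - 1)) * (z ω t) ^ 2 := by
      apply integral_nonneg_of_ae
      filter_upwards [ae_restrict_mem measurableSet_Ioi] with ω hω
      have hs : 0 ≤ Real.sin ((1 - α) * π) := by
        apply Real.sin_nonneg_of_nonneg_of_le_pi
        · nlinarith [hα.2, Real.pi_pos]
        · nlinarith [hα.1, Real.pi_pos]
      have : (0:ℝ) < ω := hω
      positivity
    nlinarith [mul_nonneg hc.le hI]
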